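/- The square Cauchy–Vandermonde matrix is invertible: let F be a field, let L and m be natural numbers with N = L + m, and let f_1, …, f_L, α_1, …, α_N ∈ F be N + L pairwise distinct elements of F. Then the N × N matrix M whose entry in row n and column ℓ is (f_ℓ − α_n)⁻¹ for 1 ≤ ℓ ≤ L, and whose entry in row n and column L + k is α_n^{k−1} for 1 ≤ k ≤ m, is invertible (equivalently, its determinant is nonzero). -/
import Mathlib

open Polynomial Finset in
private lemma cauchy_vandermonde_aux
    (F : Type*) [Field F] (L m : ℕ)
    (f : Fin L → F) (α : Fin (L + m) → F)
    (hfinj : Function.Injective f) (hαinj : Function.Injective α)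
    (hfα : ∀ ℓ n, f ℓ - α n ≠ 0)
    (cc : Fin L → F) (dd : Fin m → F)
    (hrow : ∀ n, ∑ ℓ, cc ℓ * (f ℓ - α n)⁻¹ + ∑ k, dd k * α n ^ (k : ℕ) = 0)
    (hN : 0 < L + m) :
    (∀ ℓ, cc ℓ = 0) ∧ (∀ k, dd k = 0) := by
  classical
  set Pe : F[X] := ∏ ℓ, (C (f ℓ) - X) with hPe
  set A : F[X] := ∑ ℓ, C (cc ℓ) * ∏ j ∈ univ.erase ℓ, (C (f j) - X) with hA
  set Q : F[X] := ∑ k : Fin m, C (dd k) * X ^ (k : ℕ) with hQ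
  set P : F[X] := A + Q * Pe with hP
  have hPine : Pe ≠ 0 := by
    refine Finset.prod_ne_zero_iff.mpr fun ℓ _ => ?_
    have : C (f ℓ) - X = -(X - C (f ℓ)) := by ring
    rw [this, neg_ne_zero]
    exact X_sub_C_ne_zero _
  have hAdeg : A.natDegree ≤ L - 1 := by
    refine natDegree_sum_le_of_forall_le _ _ fun ℓ _ => ?_
    refine natDegree_mul_le.trans ?_
    rw [natDegree_C, zero_add]
    refine (natDegree_prod_le _ _).trans ?_
    calc ∑ j ∈ univ.erase ℓ, (C (f j) - X).natDegree
        ≤ ∑ j ∈ univ.erase ℓ, 1 := by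
          refine Finset.sum_le_sum fun j _ => ?_
          exact (natDegree_sub_le _ _).trans (by simp)
      _ = L - 1 := by simp [Finset.card_erase_of_mem]
  have hPideg : Pe.natDegree ≤ L := by
    refine (natDegree_prod_le _ _).trans ?_
    calc ∑ j, (C (f j) - X).natDegree ≤ ∑ _j : Fin L, 1 := by
          refine Finset.sum_le_sum fun j _ => ?_
          exact (natDegree_sub_le _ _).trans (by simp)
      _ = L := by simp
  have hPdeg : P.natDegree < L + m := by
    rcases Nat.eq_zero_or_pos m with hm | hm
    · have : Q = 0 := by
        haveI : IsEmpty (Fin m) := ⟨fun k => absurd k.2 (by omega)⟩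
        simp [hQ]
      have hPA : P = A := by simp [hP, this]
      rw [hPA]
      omega
    · have hQdeg : Q.natDegree ≤ m - 1 := by
        refine natDegree_sum_le_of_forall_le _ _ fun k _ => ?_
        refine natDegree_mul_le.trans ?_
        rw [natDegree_C, zero_add, natDegree_X_pow]
        omega
      have h2 : (Q * Pe).natDegree ≤ (m - 1) + L :=
        natDegree_mul_le.trans (add_le_add hQdeg hPideg)
      have h3 : P.natDegree ≤ max (L - 1) ((m - 1) + L) :=
        (natDegree_add_le A (Q * Pe)).trans (max_le_max hAdeg h2)
      exact lt_of_le_of_lt h3 (max_lt_iff.mpr ⟨by omega, by omega⟩)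
  have hprod : ∀ ℓ n, ∏ j ∈ univ.erase ℓ, (f j - α n) = (f ℓ - α n)⁻¹ * ∏ j, (f j - α n) := by
    intro ℓ n
    rw [← Finset.mul_prod_erase univ _ (mem_univ ℓ), inv_mul_cancel_left₀ (hfα ℓ n)]
  have hevalα : ∀ n, P.eval (α n) = 0 := by
    intro n
    have : P.eval (α n) =
        ∑ ℓ, cc ℓ * ∏ j ∈ univ.erase ℓ, (f j - α n)
          + (∑ k, dd k * α n ^ (k : ℕ)) * ∏ j, (f j - α n) := by
      simp [hP, hA, hQ, hPe, eval_finset_sum, eval_prod]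
    rw [this]
    calc ∑ ℓ, cc ℓ * ∏ j ∈ univ.erase ℓ, (f j - α n)
          + (∑ k, dd k * α n ^ (k : ℕ)) * ∏ j, (f j - α n)
        = (∑ ℓ, cc ℓ * (f ℓ - α n)⁻¹ + ∑ k, dd k * α n ^ (k : ℕ)) * ∏ j, (f j - α n) := by
          rw [add_mul]
          congr 1
          rw [Finset.sum_mul]
          refine Finset.sum_congr rfl fun ℓ _ => ?_
          rw [hprod]; ring
      _ = 0 := by rw [hrow n, zero_mul]
  have hP0 : P = 0 :=
    P.eq_zero_of_natDegree_lt_card_of_eval_eq_zero hαinj hevalα (by simpa using hPdeg)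
  have hcc : ∀ ℓ, cc ℓ = 0 := by
    intro ℓ
    have h1 : P.eval (f ℓ) = 0 := by rw [hP0]; simp
    have h2 : P.eval (f ℓ) = cc ℓ * ∏ j ∈ univ.erase ℓ, (f j - f ℓ) := by
      have hPiz : (∏ j, (f j - f ℓ)) = 0 :=
        Finset.prod_eq_zero (mem_univ ℓ) (by simp)
      have : P.eval (f ℓ) =
          ∑ ℓ', cc ℓ' * ∏ j ∈ univ.erase ℓ', (f j - f ℓ)
            + (∑ k, dd k * f ℓ ^ (k : ℕ)) * ∏ j, (f j - f ℓ) := by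
        simp [hP, hA, hQ, hPe, eval_finset_sum, eval_prod]
      rw [this, hPiz, mul_zero, add_zero]
      rw [Finset.sum_eq_single ℓ]
      · intro ℓ' _ hne
        have : (∏ j ∈ univ.erase ℓ', (f j - f ℓ)) = 0 :=
          Finset.prod_eq_zero (Finset.mem_erase.mpr ⟨hne.symm, mem_univ ℓ⟩) (by simp)
        rw [this, mul_zero]
      · intro h; exact absurd (mem_univ ℓ) h
    have hne : (∏ j ∈ univ.erase ℓ, (f j - f ℓ)) ≠ 0 := by
      refine Finset.prod_ne_zero_iff.mpr fun j hj => sub_ne_zero.mpr fun h => ?_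
      exact (Finset.mem_erase.mp hj).1 (hfinj h)
    rcases mul_eq_zero.mp (h2.symm.trans h1) with h | h
    · exact h
    · exact absurd h hne
  have hA0 : A = 0 := by
    rw [hA]
    refine Finset.sum_eq_zero fun ℓ _ => ?_
    rw [hcc ℓ, map_zero, zero_mul]
  have hQ0 : Q = 0 := by
    have : Q * Pe = 0 := by
      have := hP0
      rw [hP, hA0, zero_add] at this
      exact this
    rcases mul_eq_zero.mp this with h | h
    · exact h
    · exact absurd h hPine
  refine ⟨hcc, fun k => ?_⟩
  have hcoeff : Q.coeff (k : ℕ) = dd k := by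
    rw [hQ, finset_sum_coeff]
    rw [Finset.sum_eq_single k]
    · simp
    · intro k' _ hne
      rw [coeff_C_mul, coeff_X_pow, if_neg (fun h => hne (Fin.ext h.symm)), mul_zero]
    · intro h; exact absurd (mem_univ k) h
  rw [← hcoeff, hQ0, coeff_zero]

/-- **Invertibility of the square Cauchy–Vandermonde matrix.**
`F` is a field, `N = L + m`, and the `N + L` elements `f 0, …, f (L-1), α 0, …, α (N-1)`
are pairwise distinct (encoded as injectivity of `Sum.elim f α`).  The `N × N` matrix whose
first `L` columns are Cauchy columns `(f ℓ - α n)⁻¹` and whose remaining `m` columns are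
Vandermonde columns `α n ^ (k - 1)` is invertible (equivalently, its determinant is nonzero). -/
theorem cauchy_vandermonde_isUnit
    (F : Type*) [Field F] (L m : ℕ)
    (f : Fin L → F) (α : Fin (L + m) → F)
    (hdist : Function.Injective (Sum.elim f α)) :
    IsUnit (Matrix.of fun (n j : Fin (L + m)) =>
      if h : (j : ℕ) < L then (f ⟨j, h⟩ - α n)⁻¹ else α n ^ ((j : ℕ) - L)) ∧
    (Matrix.of fun (n j : Fin (L + m)) =>
      if h : (j : ℕ) < L then (f ⟨j, h⟩ - α n)⁻¹ else α n ^ ((j : ℕ) - L)).det ≠ 0 := by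
  classical
  set M : Matrix (Fin (L + m)) (Fin (L + m)) F :=
    Matrix.of fun (n j : Fin (L + m)) =>
      if h : (j : ℕ) < L then (f ⟨j, h⟩ - α n)⁻¹ else α n ^ ((j : ℕ) - L) with hM
  have hfinj : Function.Injective f := fun a b h => by
    have := hdist (a₁ := .inl a) (a₂ := .inl b) (by simpa)
    simpa using this
  have hαinj : Function.Injective α := fun a b h => by
    have := hdist (a₁ := .inr a) (a₂ := .inr b) (by simpa)
    simpa using this
  have hfα : ∀ ℓ n, f ℓ - α n ≠ 0 := by
    intro ℓ n h
    have h' : f ℓ = α n := sub_eq_zero.mp h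
    have := hdist (a₁ := .inl ℓ) (a₂ := .inr n) (by simpa)
    simp at this
  suffices hu : IsUnit M by
    exact ⟨hu, ((Matrix.isUnit_iff_isUnit_det M).mp hu).ne_zero⟩
  rw [← Matrix.mulVec_injective_iff_isUnit]
  have key : ∀ c, M.mulVec c = 0 → c = 0 := by
    intro c hc
    rcases Nat.eq_zero_or_pos (L + m) with hN | hN
    · funext j; exact absurd j.2 (by omega)
    have hrow : ∀ n, ∑ ℓ, c (Fin.castAdd m ℓ) * (f ℓ - α n)⁻¹
        + ∑ k, c (Fin.natAdd L k) * α n ^ (k : ℕ) = 0 := by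
      intro n
      have h0 := congrFun hc n
      rw [Matrix.mulVec, dotProduct, Fin.sum_univ_add] at h0
      simp only [hM, Matrix.of_apply, Pi.zero_apply] at h0
      rw [← h0]
      congr 1
      · refine Finset.sum_congr rfl fun ℓ _ => ?_
        rw [dif_pos (by simpa using ℓ.2)]
        rw [mul_comm]
        congr 1
      · refine Finset.sum_congr rfl fun k _ => ?_
        rw [dif_neg (by simp)]
        rw [mul_comm]
        congr 2
        simp
    obtain ⟨hcc, hdd⟩ := cauchy_vandermonde_aux F L m f α hfinj hαinj hfα
      (fun ℓ => c (Fin.castAdd m ℓ)) (fun k => c (Fin.natAdd L k)) hrow hN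
    funext j
    rcases lt_or_ge (j : ℕ) L with h | h
    · have hj : j = Fin.castAdd m ⟨(j : ℕ), h⟩ := by ext; rfl
      rw [hj]; exact hcc ⟨(j : ℕ), h⟩
    · have hj : j = Fin.natAdd L ⟨(j : ℕ) - L, by omega⟩ := by ext; simp; omega
      rw [hj]; exact hdd ⟨(j : ℕ) - L, by omega⟩
  intro c1 c2 h
  have := key (c1 - c2) (by rw [Matrix.mulVec_sub, h, sub_self])
  exact sub_eq_zero.mp this
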